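/- Let n be a positive integer. The equation x² + 64y² + 64y + 16 = n has a solution in ℤ_p for all primes p and in ℝ if and only if: every prime p ≡ 3 (mod 4) divides n to an even power, and writing n = 2^s·m with m odd, either (s = 0 and n ≡ 1 (mod 8)), or (s = 2 and n/4 ≡ 5 (mod 8)), or s ∈ {4, 5}. -/

import Mathlib

open PadicInt Polynomial

private lemma padic_dvd_iff_toZMod {p : ℕ} [Fact p.Prime] {a : ℤ_[p]} :
    (p : ℤ_[p]) ∣ a ↔ PadicInt.toZMod a = 0 := by
  rw [← Ideal.mem_span_singleton, ← maximalIdeal_eq_span_p, ← PadicInt.ker_toZMod,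
    RingHom.mem_ker]

private lemma padic_isUnit_of_toZMod_ne_zero {p : ℕ} [Fact p.Prime] {a : ℤ_[p]}
    (h : PadicInt.toZMod a ≠ 0) : IsUnit a := by
  rw [PadicInt.isUnit_iff]
  refine le_antisymm (PadicInt.norm_le_one a) ?_
  by_contra hlt
  push_neg at hlt
  exact h (padic_dvd_iff_toZMod.mp ((PadicInt.norm_lt_one_iff_dvd a).mp hlt))

private lemma padic_sqrt {p : ℕ} [Fact p.Prime] {c b : ℤ_[p]}
    (h : ‖b ^ 2 - c‖ < ‖2 * b‖ ^ 2) : ∃ x : ℤ_[p], x ^ 2 = c := by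
  have hF : ∀ z : ℤ_[p], (X ^ 2 - C c).eval z = z ^ 2 - c := fun z => by simp
  have hF' : ∀ z : ℤ_[p], ((X ^ 2 - C c : Polynomial ℤ_[p]).derivative).eval z = 2 * z := by
    intro z
    simp [derivative_sub, derivative_C, derivative_X_pow] <;> norm_num
  obtain ⟨z, hz, -⟩ := hensels_lemma (F := X ^ 2 - C c) (a := b) (by simp only [coe_aeval_eq_eval]; rw [hF, hF']; exact h)
  rw [coe_aeval_eq_eval, hF] at hz
  exact ⟨z, sub_eq_zero.mp hz⟩

/-- For odd `p`, a `p`-adic integer whose reduction mod `p` is a nonzero square is a square. -/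
private lemma padic_sqrt_of_toZMod {p : ℕ} [Fact p.Prime] (hp2 : p ≠ 2) {c : ℤ_[p]}
    (hc : PadicInt.toZMod c ≠ 0) (hsq : IsSquare (PadicInt.toZMod c)) :
    ∃ x : ℤ_[p], x ^ 2 = c := by
  obtain ⟨d, hd⟩ := hsq
  set b : ℤ_[p] := ((d.val : ℕ) : ℤ_[p]) with hb
  have hbd : PadicInt.toZMod b = d := by
    rw [hb, map_natCast, ZMod.natCast_val, ZMod.cast_id]
  have h2 : PadicInt.toZMod (2 : ℤ_[p]) ≠ 0 := by
    rw [show ((2:ℤ_[p])) = ((2:ℕ):ℤ_[p]) by norm_num, map_natCast]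
    rw [ne_eq, ZMod.natCast_eq_zero_iff]
    intro h
    exact hp2 ((Nat.prime_dvd_prime_iff_eq ‹Fact p.Prime›.out Nat.prime_two).mp h)
  have hd0 : d ≠ 0 := fun h => hc (by rw [hd, h, mul_zero])
  have hb0 : PadicInt.toZMod b ≠ 0 := by rw [hbd]; exact hd0
  apply padic_sqrt (b := b)
  have h1 : ‖b ^ 2 - c‖ < 1 := by
    rw [PadicInt.norm_lt_one_iff_dvd, padic_dvd_iff_toZMod, map_sub, map_pow, hbd, hd]
    ring
  have h2b : ‖2 * b‖ = 1 := by
    have := padic_isUnit_of_toZMod_ne_zero (a := 2 * b)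
      (by rw [map_mul]; exact mul_ne_zero h2 hb0)
    exact PadicInt.isUnit_iff.mp this
  rw [h2b, one_pow]
  exact h1

/-- For odd `p`, every unit of `ℤ_p` is a sum of two squares. -/
private lemma padic_unit_sum_two_squares {p : ℕ} [Fact p.Prime] (hp2 : p ≠ 2) {m : ℤ_[p]}
    (hm : PadicInt.toZMod m ≠ 0) : ∃ x z : ℤ_[p], x ^ 2 + z ^ 2 = m := by
  obtain ⟨a, b, hab⟩ := ZMod.sq_add_sq p (PadicInt.toZMod m)
  -- wlog: one of a, b is nonzero with the OTHER giving the lift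
  rcases eq_or_ne a 0 with ha | ha
  · -- then b^2 = toZMod m, b ≠ 0
    have hb : b ≠ 0 := by
      intro hb; rw [ha, hb] at hab; simp at hab; exact hm hab.symm
    obtain ⟨x, hx⟩ := padic_sqrt_of_toZMod hp2 hm (by
      refine ⟨b, ?_⟩; rw [← hab, ha]; ring)
    exact ⟨x, 0, by rw [hx]; ring⟩
  · -- lift b as z, then m - z^2 reduces to a^2 ≠ 0
    set z : ℤ_[p] := ((b.val : ℕ) : ℤ_[p]) with hz
    have hzb : PadicInt.toZMod z = b := by
      rw [hz, map_natCast, ZMod.natCast_val, ZMod.cast_id]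
    have hred : PadicInt.toZMod (m - z ^ 2) = a ^ 2 := by
      rw [map_sub, map_pow, hzb, ← hab]; ring
    have hne : PadicInt.toZMod (m - z ^ 2) ≠ 0 := by
      rw [hred]; exact pow_ne_zero _ ha
    obtain ⟨x, hx⟩ := padic_sqrt_of_toZMod hp2 hne ⟨a, by rw [hred]; ring⟩
    exact ⟨x, z, by rw [hx]; ring⟩

/-- For `p % 4 = 1`, every element of `ℤ_p` is a sum of two squares. -/
private lemma padic_sum_two_squares_of_one_mod_four {p : ℕ} [Fact p.Prime] (hp1 : p % 4 = 1)
    (c : ℤ_[p]) : ∃ x z : ℤ_[p], x ^ 2 + z ^ 2 = c := by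
  have hp2 : p ≠ 2 := by omega
  have hsq : IsSquare (-1 : ZMod p) := ZMod.exists_sq_eq_neg_one_iff.mpr (by omega)
  have hne : (-1 : ZMod p) ≠ 0 := by
    simp only [ne_eq, neg_eq_zero]
    exact one_ne_zero
  obtain ⟨i, hi⟩ := padic_sqrt_of_toZMod hp2 (c := -1) (by rwa [map_neg, map_one])
    (by rw [map_neg, map_one]; exact hsq)
  have h2 : IsUnit (2 : ℤ_[p]) := by
    apply padic_isUnit_of_toZMod_ne_zero
    rw [show ((2:ℤ_[p])) = ((2:ℕ):ℤ_[p]) by norm_num, map_natCast, ne_eq,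
      ZMod.natCast_eq_zero_iff]
    intro h
    exact hp2 ((Nat.prime_dvd_prime_iff_eq ‹Fact p.Prime›.out Nat.prime_two).mp h)
  obtain ⟨u, hu⟩ := h2.exists_right_inv
  refine ⟨(c + 1) * u, i * ((c - 1) * u), ?_⟩
  have : i ^ 2 = -1 := by rw [← hi]
  linear_combination ((c - 1) * u) ^ 2 * this + c * (2 * u + 1) * hu

private lemma zmod_sq_add_sq_eq_zero {p : ℕ} [Fact p.Prime] (hp3 : p % 4 = 3)
    {a b : ZMod p} (h : a ^ 2 + b ^ 2 = 0) : a = 0 ∧ b = 0 := by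
  have hnsq : ¬ IsSquare (-1 : ZMod p) := by
    rw [ZMod.exists_sq_eq_neg_one_iff]; simp [hp3]
  rcases eq_or_ne b 0 with hb | hb
  · subst hb
    constructor
    · have : a ^ 2 = 0 := by linear_combination h
      exact pow_eq_zero_iff (n := 2) (by norm_num) |>.mp this
    · rfl
  · exfalso
    apply hnsq
    refine ⟨a * b⁻¹, ?_⟩
    have hbu : b * b⁻¹ = 1 := ZMod.mul_inv_of_unit b (Ne.isUnit hb)
    have ha2 : a ^ 2 = -(b ^ 2) := by linear_combination h
    linear_combination (-(b⁻¹ ^ 2)) * h + (b * b⁻¹ + 1) * hbu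

/-- Descent: for `p ≡ 3 (mod 4)`, if `x² + z² = p^k · m` with `m` a unit, then `k` is even. -/
private lemma padic_descent {p : ℕ} [Fact p.Prime] (hp3 : p % 4 = 3) :
    ∀ k : ℕ, ∀ m x z : ℤ_[p], ¬ (p : ℤ_[p]) ∣ m →
      x ^ 2 + z ^ 2 = (p : ℤ_[p]) ^ k * m → Even k := by
  intro k
  induction k using Nat.strong_induction_on with
  | _ k ih =>
    intro m x z hm heq
    rcases Nat.eq_zero_or_pos k with rfl | hk
    · exact Even.zero
    have hp0 : (p : ℤ_[p]) ≠ 0 := by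
      exact_mod_cast (Nat.cast_ne_zero (R := ℤ_[p])).mpr (‹Fact p.Prime›.out.pos.ne')
    have hdvd : (p : ℤ_[p]) ∣ x ^ 2 + z ^ 2 := by
      rw [heq]
      exact Dvd.dvd.mul_right (dvd_pow_self _ hk.ne') m
    have hred : PadicInt.toZMod x ^ 2 + PadicInt.toZMod z ^ 2 = 0 := by
      have := padic_dvd_iff_toZMod.mp hdvd
      rw [map_add, map_pow, map_pow] at this
      exact this
    obtain ⟨hx0, hz0⟩ := zmod_sq_add_sq_eq_zero hp3 hred
    obtain ⟨x', rfl⟩ := padic_dvd_iff_toZMod.mpr hx0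
    obtain ⟨z', rfl⟩ := padic_dvd_iff_toZMod.mpr hz0
    rcases Nat.lt_or_ge k 2 with hk2 | hk2
    · -- k = 1 : contradiction
      exfalso
      have hk1 : k = 1 := by omega
      subst hk1
      apply hm
      refine ⟨x' ^ 2 + z' ^ 2, ?_⟩
      apply mul_left_cancel₀ hp0
      rw [pow_one] at heq
      linear_combination -heq
    · have heq' : x' ^ 2 + z' ^ 2 = (p : ℤ_[p]) ^ (k - 2) * m := by
        apply mul_left_cancel₀ (pow_ne_zero 2 hp0)
        rw [show (p : ℤ_[p]) ^ 2 * ((p : ℤ_[p]) ^ (k - 2) * m) = (p : ℤ_[p]) ^ k * m by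
          rw [← mul_assoc, ← pow_add]; congr 2; omega]
        linear_combination heq
      have := ih (k - 2) (by omega) m x' z' hm heq'
      rw [Nat.even_iff] at this ⊢
      omega

private lemma two_cast_eq : ((2 : ℕ) : ℤ_[2]) = (2 : ℤ_[2]) := by norm_num

private lemma two_adic_sqrt {c : ℤ_[2]} (h : PadicInt.toZModPow 3 c = 1) :
    ∃ x : ℤ_[2], x ^ 2 = c := by
  apply padic_sqrt (b := 1)
  have hker : c - 1 ∈ RingHom.ker (PadicInt.toZModPow (p := 2) 3) := by
    rw [RingHom.mem_ker, map_sub, map_one, h, sub_self]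
  rw [PadicInt.ker_toZModPow, Ideal.mem_span_singleton] at hker
  obtain ⟨t, ht⟩ := hker
  have h1 : ‖(1 : ℤ_[2]) ^ 2 - c‖ ≤ ‖((2 : ℕ) : ℤ_[2]) ^ 3‖ := by
    rw [show (1 : ℤ_[2]) ^ 2 - c = -(c - 1) by ring, norm_neg, ht, norm_mul]
    exact mul_le_of_le_one_right (norm_nonneg _) (PadicInt.norm_le_one t)
  have h2 : ‖((2 : ℕ) : ℤ_[2]) ^ 3‖ = ((2 : ℝ) ^ (3:ℕ))⁻¹ := by
    rw [PadicInt.norm_p_pow]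
    norm_num
  have h3 : ‖(2 : ℤ_[2]) * 1‖ = (2 : ℝ)⁻¹ := by
    rw [mul_one, ← two_cast_eq, PadicInt.norm_p]
    norm_num
  rw [h3]
  calc ‖(1 : ℤ_[2]) ^ 2 - c‖ ≤ ((2:ℝ) ^ (3:ℕ))⁻¹ := h2 ▸ h1
    _ < ((2:ℝ)⁻¹) ^ 2 := by norm_num

private lemma two_adic_odd_sqrt {c : ℤ_[2]} (h : PadicInt.toZModPow 3 c = 1) :
    ∃ y : ℤ_[2], (2 * y + 1) ^ 2 = c := by
  obtain ⟨x, hx⟩ := two_adic_sqrt h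
  have hx2 : ¬ ((2 : ℕ) : ℤ_[2]) ∣ x := by
    rintro ⟨t, rfl⟩
    rw [← hx] at h
    rw [mul_pow, map_mul, map_pow, map_natCast] at h
    revert h
    have : ∀ r : ZMod (2 ^ 3), ¬ ((2:ℕ) : ZMod (2^3)) ^ 2 * r = 1 := by decide
    exact this _
  have hx1 : PadicInt.toZMod x = 1 := by
    have hne : PadicInt.toZMod x ≠ 0 := fun h0 => hx2 (padic_dvd_iff_toZMod.mpr h0)
    revert hne
    have : ∀ r : ZMod 2, r ≠ 0 → r = 1 := by decide
    exact this _
  have : ((2 : ℕ) : ℤ_[2]) ∣ x - 1 := by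
    apply padic_dvd_iff_toZMod.mpr
    rw [map_sub, map_one, hx1, sub_self]
  obtain ⟨y, hy⟩ := this
  refine ⟨y, ?_⟩
  rw [← hx]
  have : x = 2 * y + 1 := by rw [← two_cast_eq]; linear_combination hy
  rw [this]

private lemma odd_mod_four_eq_one {m : ℕ} (hm : Odd m)
    (h : ∀ p : ℕ, p.Prime → p % 4 = 3 → Even (padicValNat p m)) : m % 4 = 1 := by
  obtain ⟨x, y, hxy⟩ := Nat.eq_sq_add_sq_iff.mpr (fun q hq h3 => h q (Nat.prime_of_mem_primeFactors hq) h3)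
  have hsq : ∀ t : ℕ, t ^ 2 % 4 = 0 ∨ t ^ 2 % 4 = 1 := by
    intro t
    rcases Nat.even_or_odd t with ⟨k, rfl⟩ | ⟨k, rfl⟩
    · left; have : (k + k) ^ 2 = 4 * k ^ 2 := by ring
      omega
    · right; have : (2 * k + 1) ^ 2 = 4 * (k ^ 2 + k) + 1 := by ring
      omega
  have hx := hsq x
  have hy := hsq y
  have hmo : m % 2 = 1 := Nat.odd_iff.mp hm
  omega

private lemma padicValNat_two_pow_mul {s m p : ℕ} [Fact p.Prime] (hp2 : p ≠ 2) (hm : m ≠ 0) :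
    padicValNat p (2 ^ s * m) = padicValNat p m := by
  rw [padicValNat.mul (pow_ne_zero s two_ne_zero) hm, padicValNat.eq_zero_of_not_dvd, zero_add]
  intro hdvd
  exact hp2 ((Nat.prime_dvd_prime_iff_eq ‹Fact p.Prime›.out Nat.prime_two).mp
    (‹Fact p.Prime›.out.dvd_of_dvd_pow hdvd))

set_option maxHeartbeats 4000000 in
set_option maxRecDepth 10000 in
private lemma key2 : ∀ a b : ZMod (2 ^ 7),
    ((a ^ 2 + 64 * b ^ 2 + 64 * b + 16 : ZMod (2 ^ 7)).val % 8 = 1 ∨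
     (a ^ 2 + 64 * b ^ 2 + 64 * b + 16 : ZMod (2 ^ 7)).val % 32 = 20 ∨
     (a ^ 2 + 64 * b ^ 2 + 64 * b + 16 : ZMod (2 ^ 7)).val % 64 = 16 ∨
     (a ^ 2 + 64 * b ^ 2 + 64 * b + 16 : ZMod (2 ^ 7)).val = 32) := by decide

private lemma zmod8_natCast {a r : ℕ} (h : a % 8 = r) :
    ((a : ℕ) : ZMod (2 ^ 3)) = (r : ZMod (2 ^ 3)) := by
  have h8 : a % 2 ^ 3 = r := by norm_num [h]
  rw [← ZMod.natCast_mod a (2 ^ 3), h8]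

/-- Let `n` be a positive integer. The equation `x² + 64y² + 64y + 16 = n` is
solvable in `ℤ_p` for all primes `p` and in `ℝ` if and only if every prime
`p ≡ 3 (mod 4)` divides `n` to an even power, and writing `n = 2^s·m` with `m`
odd, either `s = 0` and `n ≡ 1 (mod 8)`, or `s = 2` and `n/4 ≡ 5 (mod 8)`, or
`s ∈ {4, 5}`. -/
theorem local_solvability_iff_x_sq_add_64y_sq_add_64y_add_16
    (n : ℕ) (hn : 0 < n) :
    ((∀ (p : ℕ) (_ : Fact p.Prime),
        ∃ x y : ℤ_[p], x ^ 2 + 64 * y ^ 2 + 64 * y + 16 = n) ∧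
      (∃ x y : ℝ, x ^ 2 + 64 * y ^ 2 + 64 * y + 16 = n)) ↔
    ((∀ p : ℕ, p.Prime → p % 4 = 3 → Even (padicValNat p n)) ∧
      ∃ s m : ℕ, n = 2 ^ s * m ∧ Odd m ∧
        ((s = 0 ∧ n % 8 = 1) ∨ (s = 2 ∧ (n / 4) % 8 = 5) ∨ s = 4 ∨ s = 5)) := by
  constructor
  · rintro ⟨hsol, -⟩
    constructor
    · -- odd primes ≡ 3 mod 4
      intro p hp' h3
      haveI : Fact p.Prime := ⟨hp'⟩
      obtain ⟨x, y, hxy⟩ := hsol p ⟨hp'⟩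
      have heq : x ^ 2 + (8 * y + 4) ^ 2 = (n : ℤ_[p]) := by linear_combination hxy
      have hdec : p ^ n.factorization p * (n / p ^ n.factorization p) = n :=
        Nat.ordProj_mul_ordCompl_eq_self n p
      have hmnd : ¬ p ∣ (n / p ^ n.factorization p) := Nat.not_dvd_ordCompl hp' hn.ne'
      have hmp : ¬ (p : ℤ_[p]) ∣ ((n / p ^ n.factorization p : ℕ) : ℤ_[p]) := by
        intro hdvd
        apply hmnd
        have := padic_dvd_iff_toZMod.mp hdvd
        rw [map_natCast] at this
        exact (ZMod.natCast_eq_zero_iff _ p).mp this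
      have hcast : x ^ 2 + (8 * y + 4) ^ 2 =
          (p : ℤ_[p]) ^ (n.factorization p) * ((n / p ^ n.factorization p : ℕ) : ℤ_[p]) := by
        rw [heq, ← Nat.cast_pow, ← Nat.cast_mul, hdec]
      have := padic_descent h3 (n.factorization p) _ x (8 * y + 4) hmp hcast
      rwa [← Nat.factorization_def n hp']
    · -- 2-adic conditions
      obtain ⟨x, y, hxy⟩ := hsol 2 ⟨Nat.prime_two⟩
      have h7 := congrArg (PadicInt.toZModPow (p := 2) 7) hxy
      simp only [map_add, map_mul, map_pow, map_ofNat, map_natCast] at h7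
      have hkey := key2 (PadicInt.toZModPow 7 x) (PadicInt.toZModPow 7 y)
      rw [h7] at hkey
      haveI : NeZero (2 ^ 7 : ℕ) := ⟨by norm_num⟩
      rw [ZMod.val_natCast] at hkey
      have h128 : (2 : ℕ) ^ 7 = 128 := by norm_num
      rw [h128] at hkey
      rcases hkey with h | h | h | h
      · exact ⟨0, n, by norm_num, Nat.odd_iff.mpr (by omega), Or.inl ⟨rfl, by omega⟩⟩
      · exact ⟨2, n / 4, by rw [show (2:ℕ)^2 = 4 by norm_num]; omega,
          Nat.odd_iff.mpr (by omega), Or.inr (Or.inl ⟨rfl, by omega⟩)⟩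
      · exact ⟨4, n / 16, by rw [show (2:ℕ)^4 = 16 by norm_num]; omega,
          Nat.odd_iff.mpr (by omega), Or.inr (Or.inr (Or.inl rfl))⟩
      · exact ⟨5, n / 32, by rw [show (2:ℕ)^5 = 32 by norm_num]; omega,
          Nat.odd_iff.mpr (by omega), Or.inr (Or.inr (Or.inr rfl))⟩
  · rintro ⟨h1, s, m, hnm, hmodd, hcase⟩
    have hm0 : m ≠ 0 := by rintro rfl; simp at hmodd
    constructor
    · intro p fp
      by_cases hp2 : p = 2
      · subst hp2
        -- 2-adic constructions
        rcases hcase with ⟨hs0, h8⟩ | ⟨hs2, h45⟩ | hs4 | hs5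
        · -- s = 0, n ≡ 1 mod 8
          obtain ⟨x, hx⟩ := two_adic_sqrt (c := (n : ℤ_[2]) - 16) (by
            rw [map_sub, map_natCast, map_ofNat, zmod8_natCast h8]
            decide)
          exact ⟨x, 0, by linear_combination hx⟩
        · -- s = 2, n/4 ≡ 5 mod 8
          subst hs2
          have hm4 : m = n / 4 := by omega
          have hm8 : m % 8 = 5 := by rw [hm4]; exact h45
          obtain ⟨a, ha⟩ := two_adic_sqrt (c := (m : ℤ_[2]) - 4) (by
            rw [map_sub, map_natCast, map_ofNat, zmod8_natCast hm8]
            decide)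
          have hcast : (n : ℤ_[2]) = 4 * (m : ℤ_[2]) := by
            rw [hnm]; push_cast; ring
          refine ⟨2 * a, 0, ?_⟩
          rw [hcast]
          linear_combination 4 * ha
        · -- s = 4
          subst hs4
          have hm4 : m % 4 = 1 := by
            apply odd_mod_four_eq_one hmodd
            intro p hp' h3
            haveI : Fact p.Prime := ⟨hp'⟩
            have := h1 p hp' h3
            rwa [hnm, padicValNat_two_pow_mul (by omega) hm0] at this
          have hcast : (n : ℤ_[2]) = 16 * (m : ℤ_[2]) := by
            rw [hnm]; push_cast; ring
          rcases (by omega : m % 8 = 1 ∨ m % 8 = 5) with hm8 | hm8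
          · obtain ⟨y, hy⟩ := two_adic_odd_sqrt (c := (m : ℤ_[2])) (by
              rw [map_natCast, zmod8_natCast hm8]
              decide)
            refine ⟨0, y, ?_⟩
            rw [hcast]
            linear_combination 16 * hy
          · obtain ⟨y, hy⟩ := two_adic_odd_sqrt (c := (m : ℤ_[2]) - 4) (by
              rw [map_sub, map_natCast, map_ofNat, zmod8_natCast hm8]
              decide)
            refine ⟨8, y, ?_⟩
            rw [hcast]
            linear_combination 16 * hy
        · -- s = 5
          subst hs5
          have hm4 : m % 4 = 1 := by
            apply odd_mod_four_eq_one hmodd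
            intro p hp' h3
            haveI : Fact p.Prime := ⟨hp'⟩
            have := h1 p hp' h3
            rwa [hnm, padicValNat_two_pow_mul (by omega) hm0] at this
          have hcast : (n : ℤ_[2]) = 32 * (m : ℤ_[2]) := by
            rw [hnm]; push_cast; ring
          rcases (by omega : m % 8 = 1 ∨ m % 8 = 5) with hm8 | hm8 <;>
          · obtain ⟨y, hy⟩ := two_adic_odd_sqrt (c := 2 * (m : ℤ_[2]) - 1) (by
              rw [map_sub, map_mul, map_natCast, map_ofNat, map_one, zmod8_natCast hm8]
              decide)
            refine ⟨4, y, ?_⟩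
            rw [hcast]
            linear_combination 16 * hy
      · -- odd primes
        have hodd : p % 2 = 1 := Nat.odd_iff.mp (fp.out.odd_of_ne_two hp2)
        -- reduce to sum of two squares
        have key : ∃ x z : ℤ_[p], x ^ 2 + z ^ 2 = (n : ℤ_[p]) := by
          rcases (by omega : p % 4 = 1 ∨ p % 4 = 3) with h4 | h4
          · exact padic_sum_two_squares_of_one_mod_four h4 _
          · have heven := h1 p fp.out h4
            rw [← Nat.factorization_def n fp.out] at heven
            obtain ⟨t, ht⟩ := heven
            have hdec : p ^ n.factorization p * (n / p ^ n.factorization p) = n :=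
              Nat.ordProj_mul_ordCompl_eq_self n p
            have hmnd : ¬ p ∣ (n / p ^ n.factorization p) := Nat.not_dvd_ordCompl fp.out hn.ne'
            rw [ht] at hdec hmnd
            have hmu : PadicInt.toZMod ((( n / p ^ (t + t) : ℕ)) : ℤ_[p]) ≠ 0 := by
              rw [map_natCast, ne_eq, ZMod.natCast_eq_zero_iff]
              exact hmnd
            obtain ⟨c, d, hcd⟩ := padic_unit_sum_two_squares hp2 hmu
            refine ⟨(p : ℤ_[p]) ^ t * c, (p : ℤ_[p]) ^ t * d, ?_⟩
            have hthis : ((p ^ (t + t) * (n / p ^ (t + t)) : ℕ) : ℤ_[p])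
                = (n : ℤ_[p]) := by rw [hdec]
            push_cast at hthis
            rw [← hthis]
            have h2t : (p : ℤ_[p]) ^ (t + t) = ((p : ℤ_[p]) ^ t) ^ 2 := by ring
            linear_combination ((p : ℤ_[p]) ^ t) ^ 2 * hcd -
              (((n / p ^ (t + t) : ℕ)) : ℤ_[p]) * h2t
        obtain ⟨x, z, hxz⟩ := key
        have h8u : IsUnit (8 : ℤ_[p]) := by
          apply padic_isUnit_of_toZMod_ne_zero
          rw [show ((8:ℤ_[p])) = ((8:ℕ):ℤ_[p]) by norm_num, map_natCast, ne_eq,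
            ZMod.natCast_eq_zero_iff]
          intro hdvd
          have : p ∣ 2 ^ 3 := by norm_num at hdvd ⊢; exact hdvd
          exact hp2 ((Nat.prime_dvd_prime_iff_eq fp.out Nat.prime_two).mp
            (fp.out.dvd_of_dvd_pow this))
        obtain ⟨u, hu⟩ := h8u.exists_right_inv
        refine ⟨x, (z - 4) * u, ?_⟩
        have h8y : 8 * ((z - 4) * u) + 4 = z := by linear_combination (z - 4) * hu
        linear_combination hxz + (8 * ((z - 4) * u) + 4 + z) * h8y
    · -- real solution
      refine ⟨Real.sqrt (n / 17), (Real.sqrt (n / 17) - 1) / 2, ?_⟩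
      have ht : Real.sqrt (n / 17) ^ 2 = (n : ℝ) / 17 :=
        Real.sq_sqrt (by positivity)
      linear_combination 17 * ht
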